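/- Let a, b be positive integers and Δ a PR complex of degree type (a,b) on n vertices. Then n ≥ 3b. -/

import Mathlib

open Finset
open scoped Classical

/-- An abstract simplicial complex: a collection of finite subsets of the
vertex type `V` closed under taking subsets. -/
def IsComplex {V : Type} (K : Set (Finset V)) : Prop :=
  ∀ s ∈ K, ∀ t ⊆ s, t ∈ K

/-- The link of a face `σ` in `K`: all faces `τ` disjoint from `σ` with `σ ∪ τ ∈ K`. -/
def link {V : Type} [DecidableEq V] (K : Set (Finset V)) (σ : Finset V) : Set (Finset V) :=
  {τ | Disjoint σ τ ∧ σ ∪ τ ∈ K}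

theorem link_isComplex {V : Type} [DecidableEq V] {K : Set (Finset V)} (hK : IsComplex K)
    (σ : Finset V) : IsComplex (link K σ) := by
  intro s hs t ht
  exact ⟨hs.1.mono_right ht, hK _ hs.2 _ (Finset.union_subset_union_right ht)⟩

/-- The incidence sign of a vertex `x` with respect to a face `σ`, relative to a fixed
(arbitrary) well-ordering of the vertices. -/
noncomputable def bdrySign {V : Type} (σ : Finset V) (x : V) : ℤ :=
  (-1 : ℤ) ^ (σ.filter (fun y => WellOrderingRel y x)).card

/-- The total (reduced) simplicial chain module of `K` with coefficients in `𝕜`: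
functions from the faces of `K` (including the empty face) to `𝕜`. -/
abbrev TotalChains (𝕜 : Type) [Field 𝕜] {V : Type} (K : Set (Finset V)) : Type :=
  {s : Finset V // s ∈ K} → 𝕜

/-- The simplicial boundary operator on the total chain module, written in terms of
cofaces: `(∂c)(τ) = Σ_{x ∉ τ, τ ∪ {x} ∈ K} ± c(τ ∪ {x})`. -/
noncomputable def bdryMap (𝕜 : Type) [Field 𝕜] {V : Type} [DecidableEq V] [Fintype V]
    (K : Set (Finset V)) : TotalChains 𝕜 K →ₗ[𝕜] TotalChains 𝕜 K where
  toFun c := fun τ => ∑ x ∈ τ.1ᶜ,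
    if h : insert x τ.1 ∈ K then bdrySign τ.1 x • c ⟨insert x τ.1, h⟩ else 0
  map_add' c d := by
    funext τ
    rw [Pi.add_apply, ← Finset.sum_add_distrib]
    refine Finset.sum_congr rfl fun x _ => ?_
    split
    · rw [Pi.add_apply, smul_add]
    · rw [add_zero]
  map_smul' a c := by
    funext τ
    rw [RingHom.id_apply, Pi.smul_apply, Finset.smul_sum]
    refine Finset.sum_congr rfl fun x _ => ?_
    split
    · rw [Pi.smul_apply, smul_comm]
    · rw [smul_zero]

/-- The submodule of chains supported on faces of cardinality `i + 1`
(the chains of homological degree `i`). -/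
def degChains (𝕜 : Type) [Field 𝕜] {V : Type} (K : Set (Finset V)) (i : ℤ) :
    Submodule 𝕜 (TotalChains 𝕜 K) where
  carrier := {c | ∀ τ : {s : Finset V // s ∈ K}, (τ.1.card : ℤ) ≠ i + 1 → c τ = 0}
  add_mem' := by
    intro a b ha hb τ hτ
    rw [Pi.add_apply, ha τ hτ, hb τ hτ, add_zero]
  zero_mem' := fun τ _ => rfl
  smul_mem' := by
    intro a c hc τ hτ
    rw [Pi.smul_apply, hc τ hτ, smul_zero]

/-- The `i`-th reduced simplicial homology of the complex `K` over the field `𝕜`: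
degree-`i` cycles modulo boundaries of degree-`(i+1)` chains. -/
noncomputable abbrev redHomology (𝕜 : Type) [Field 𝕜] {V : Type} [DecidableEq V] [Fintype V]
    (K : Set (Finset V)) (i : ℤ) : Type :=
  ↥(degChains 𝕜 K i ⊓ LinearMap.ker (bdryMap 𝕜 K)) ⧸
    Submodule.comap (degChains 𝕜 K i ⊓ LinearMap.ker (bdryMap 𝕜 K)).subtype
      (Submodule.map (bdryMap 𝕜 K) (degChains 𝕜 K (i + 1)))

/-- The complex `K` is PR with degree type `(d p, …, d 1)` and offset `s`:
for every size `m` and degree `i`, some face of cardinality `m` has a link with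
nontrivial reduced homology in degree `i` exactly when `i = r - 1` and
`m = s + d p + ⋯ + d (r+1)` for some `0 ≤ r ≤ p`. -/
def HasDegreeTypeOffset (𝕜 : Type) [Field 𝕜] {V : Type} [DecidableEq V] [Fintype V]
    (K : Set (Finset V)) (p : ℕ) (d : ℕ → ℕ) (s : ℕ) : Prop :=
  ∀ (m : ℕ) (i : ℤ),
    (∃ σ ∈ K, σ.card = m ∧ Nontrivial (redHomology 𝕜 (link K σ) i)) ↔
    (∃ r : ℕ, r ≤ p ∧ i = (r : ℤ) - 1 ∧ m = s + ∑ j ∈ Finset.Ioc r p, d j)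


set_option linter.unusedSectionVars false

section signs
variable {V : Type} [DecidableEq V]

lemma bdrySign_sq (σ : Finset V) (x : V) : bdrySign σ x * bdrySign σ x = 1 := by
  rw [bdrySign, ← pow_add]
  exact Even.neg_one_pow ⟨_, rfl⟩

lemma bdrySign_insert (σ : Finset V) (w x : V) (hw : w ∉ σ) :
    bdrySign (insert w σ) x =
      (if WellOrderingRel w x then -1 else 1) * bdrySign σ x := by
  rw [bdrySign, bdrySign, Finset.filter_insert]
  split
  · rw [Finset.card_insert_of_notMem (fun h => hw (Finset.mem_of_mem_filter _ h)), pow_succ]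
    ring
  · ring

lemma wor_not_both {w x : V} (h1 : WellOrderingRel w x) (h2 : WellOrderingRel x w) : False := by
  have : WellOrderingRel w w := IsTrans.trans _ _ _ h1 h2
  exact irrefl_of WellOrderingRel w this

lemma sign_key {σ : Finset V} {w x : V} (hw : w ∉ σ) (hx : x ∉ σ) (hwx : w ≠ x) :
    bdrySign (insert w σ) x * bdrySign (insert x σ) w
      = -(bdrySign σ w * bdrySign σ x) := by
  rw [bdrySign_insert σ w x hw, bdrySign_insert σ x w hx]
  rcases trichotomous_of WellOrderingRel w x with h | h | h
  · rw [if_pos h, if_neg (fun h' => wor_not_both h h')]; ring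
  · exact absurd h hwx
  · rw [if_neg (fun h' => wor_not_both h' h), if_pos h]; ring

lemma bdrySign_singleton_anti {x y : V} (hxy : x ≠ y) :
    bdrySign {x} y = - bdrySign {y} x := by
  have h := sign_key (σ := (∅ : Finset V)) (w := x) (x := y)
    (Finset.notMem_empty x) (Finset.notMem_empty y) hxy
  simp only [Finset.insert_empty] at h
  have h2 := bdrySign_sq ({y} : Finset V) x
  have : bdrySign (∅:Finset V) x * bdrySign (∅:Finset V) y = 1 := by
    simp [bdrySign]
  rw [this] at h
  calc bdrySign {x} y = bdrySign {x} y * (bdrySign {y} x * bdrySign {y} x) := by rw [h2, mul_one]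
  _ = (bdrySign {x} y * bdrySign {y} x) * bdrySign {y} x := by ring
  _ = - bdrySign {y} x := by rw [h]; ring

lemma bdrySign_empty (x : V) : bdrySign (∅ : Finset V) x = 1 := by simp [bdrySign]
end signs

section cone
set_option linter.unusedSectionVars false
variable {𝕜 : Type} [Field 𝕜] {V : Type} [DecidableEq V] [Fintype V]

/-- The cone operator with apex `w`. -/
noncomputable def coneMap {K : Set (Finset V)} (hK : IsComplex K) (w : V)
    (c : TotalChains 𝕜 K) : TotalChains 𝕜 K :=
  fun τ => if h : w ∈ τ.1 then
    bdrySign (τ.1.erase w) w • c ⟨τ.1.erase w, hK _ τ.2 _ (Finset.erase_subset _ _)⟩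
  else 0

lemma bdryMap_apply {K : Set (Finset V)} (c : TotalChains 𝕜 K) (t : Finset V) (ht : t ∈ K) :
    bdryMap 𝕜 K c ⟨t, ht⟩ = ∑ x ∈ tᶜ,
      if h : insert x t ∈ K then bdrySign t x • c ⟨insert x t, h⟩ else 0 := rfl

lemma coneMap_apply {K : Set (Finset V)} (hK : IsComplex K) (w : V) (c : TotalChains 𝕜 K)
    (t : Finset V) (ht : t ∈ K) :
    coneMap hK w c ⟨t, ht⟩ = if h : w ∈ t then
      bdrySign (t.erase w) w • c ⟨t.erase w, hK _ ht _ (Finset.erase_subset _ _)⟩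
    else 0 := rfl

lemma cone_identity {K : Set (Finset V)} (hK : IsComplex K) (w : V) (c : TotalChains 𝕜 K)
    (H : ∀ (π : Finset V) (h : π ∈ K), w ∉ π → c ⟨π, h⟩ ≠ 0 → insert w π ∈ K)
    (τ : {s : Finset V // s ∈ K}) :
    bdryMap 𝕜 K (coneMap hK w c) τ + coneMap hK w (bdryMap 𝕜 K c) τ = c τ := by
  obtain ⟨t, ht⟩ := τ
  rw [bdryMap_apply, coneMap_apply]
  by_cases hw : w ∈ t
  · -- main case
    have hwc : w ∉ tᶜ := by simp [hw]
    have hne : insert w (t.erase w) = t := Finset.insert_erase hw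
    rw [dif_pos hw, bdryMap_apply, Finset.compl_erase, Finset.sum_insert hwc, hne,
      dif_pos ht, smul_add, smul_smul, bdrySign_sq, one_smul, Finset.smul_sum,
      ← add_assoc, add_right_comm, add_eq_right, ← Finset.sum_add_distrib]
    refine Finset.sum_eq_zero fun x hx => ?_
    have hxt : x ∉ t := Finset.mem_compl.mp hx
    have hxw : x ≠ w := fun h => hxt (h ▸ hw)
    have hwt' : w ∉ t.erase w := Finset.notMem_erase _ _
    have hxt' : x ∉ t.erase w := fun h => hxt (Finset.mem_of_mem_erase h)
    have herase : (insert x t).erase w = insert x (t.erase w) :=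
      Finset.erase_insert_of_ne hxw
    by_cases h1 : insert x t ∈ K
    · have h2 : insert x (t.erase w) ∈ K :=
        hK _ h1 _ (Finset.insert_subset_insert x (Finset.erase_subset w t))
      rw [dif_pos h1, dif_pos h2, coneMap_apply,
        dif_pos (Finset.mem_insert_of_mem hw)]
      have hmem : ∀ (h : (insert x t).erase w ∈ K),
          bdrySign ((insert x t).erase w) w • c ⟨(insert x t).erase w, h⟩
            = bdrySign (insert x (t.erase w)) w • c ⟨insert x (t.erase w), h2⟩ := by
        intro h
        congr 1
        · rw [herase]
        · congr 1; exact Subtype.ext herase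
      have key : bdrySign t x * bdrySign (insert x (t.erase w)) w
          + bdrySign (t.erase w) w * bdrySign (t.erase w) x = 0 := by
        have hsk := sign_key (σ := t.erase w) hwt' hxt' (fun h => hxw h.symm)
        rw [hne] at hsk
        rw [hsk]; ring
      rw [hmem, smul_smul, smul_smul, ← add_smul, key, zero_smul]
    · rw [dif_neg h1]
      by_cases h2 : insert x (t.erase w) ∈ K
      · rw [dif_pos h2]
        have hcz : c ⟨insert x (t.erase w), h2⟩ = 0 := by
          by_contra hcz
          apply h1
          have hwm : w ∉ insert x (t.erase w) := by
            simp only [Finset.mem_insert]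
            rintro (h | h)
            · exact hxw h.symm
            · exact hwt' h
          have := H _ h2 hwm hcz
          rwa [Finset.insert_comm, hne] at this
        rw [hcz, smul_zero, smul_zero, add_zero]
      · rw [dif_neg h2, smul_zero, add_zero]
  · -- easy case: w ∉ t
    rw [dif_neg hw, add_zero]
    have hwc : w ∈ tᶜ := Finset.mem_compl.mpr hw
    rw [Finset.sum_eq_single_of_mem w hwc]
    · by_cases h1 : insert w t ∈ K
      · rw [dif_pos h1, coneMap_apply, dif_pos (Finset.mem_insert_self _ _)]
        have herase : (insert w t).erase w = t := Finset.erase_insert hw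
        have hmem : ∀ (h : (insert w t).erase w ∈ K),
            bdrySign ((insert w t).erase w) w • c ⟨(insert w t).erase w, h⟩
              = bdrySign t w • c ⟨t, ht⟩ := by
          intro h
          congr 1
          · rw [herase]
          · congr 1; exact Subtype.ext herase
        rw [hmem, smul_smul, bdrySign_sq, one_smul]
      · rw [dif_neg h1]
        by_contra hcz
        exact h1 (H t ht hw fun h => hcz h.symm)
    · intro x hx hxw
      have hwn : ¬ w ∈ insert x t := by
        simp only [Finset.mem_insert]
        rintro (h | h)
        · exact hxw h.symm
        · exact hw h
      split
      · rw [coneMap_apply, dif_neg hwn, smul_zero]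
      · rfl
end cone

section lemA
set_option linter.unusedSectionVars false
variable {𝕜 : Type} [Field 𝕜] {V : Type} [DecidableEq V] [Fintype V]

lemma cone_solve {K : Set (Finset V)} (hK : IsComplex K) (w : V) (z : TotalChains 𝕜 K)
    (hz1 : z ∈ degChains 𝕜 K 1) (hzk : bdryMap 𝕜 K z = 0)
    (H : ∀ (π : Finset V) (h : π ∈ K), w ∉ π → z ⟨π, h⟩ ≠ 0 → insert w π ∈ K) :
    ∃ d ∈ degChains 𝕜 K 2, bdryMap 𝕜 K d = z := by
  refine ⟨coneMap hK w z, ?_, ?_⟩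
  · intro τ hτ
    obtain ⟨t, ht⟩ := τ
    rw [coneMap_apply]
    by_cases hwt : w ∈ t
    · rw [dif_pos hwt]
      have h1 : 1 ≤ t.card := Finset.card_pos.mpr ⟨w, hwt⟩
      have hz : z ⟨t.erase w, hK _ ht _ (Finset.erase_subset _ _)⟩ = 0 := by
        apply hz1
        rw [Finset.card_erase_of_mem hwt]
        simp only [ne_eq] at hτ ⊢
        omega
      rw [hz, smul_zero]
    · rw [dif_neg hwt]
  · funext τ
    have hid := cone_identity hK w z H τ
    have h0 : coneMap hK w (bdryMap 𝕜 K z) τ = 0 := by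
      rw [hzk]
      obtain ⟨t, ht⟩ := τ
      rw [coneMap_apply]
      split <;> simp
    rw [h0, add_zero] at hid
    exact hid

lemma exact_of_cover {K : Set (Finset V)} (hK : IsComplex K) (F G : Finset V)
    (hF : F ∈ K) (hG : G ∈ K) (hcov : ∀ π ∈ K, π ⊆ F ∨ π ⊆ G)
    (z : TotalChains 𝕜 K) (hz1 : z ∈ degChains 𝕜 K 1) (hzk : bdryMap 𝕜 K z = 0) :
    ∃ d ∈ degChains 𝕜 K 2, bdryMap 𝕜 K d = z := by
  by_cases hFG : (F ∩ G).Nonempty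
  · obtain ⟨w, hw⟩ := hFG
    have hwF : w ∈ F := (Finset.mem_inter.mp hw).1
    have hwG : w ∈ G := (Finset.mem_inter.mp hw).2
    refine cone_solve hK w z hz1 hzk fun π hπ hwπ hzπ => ?_
    rcases hcov π hπ with h | h
    · exact hK _ hF _ (Finset.insert_subset hwF h)
    · exact hK _ hG _ (Finset.insert_subset hwG h)
  · rw [Finset.not_nonempty_iff_eq_empty] at hFG
    classical
    set z₁ : TotalChains 𝕜 K := fun τ => if τ.1 ⊆ F then z τ else 0 with hz₁def
    have hz₁mem : z₁ ∈ degChains 𝕜 K 1 := by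
      intro τ hτ
      simp only [hz₁def]
      split
      · exact hz1 τ hτ
      · rfl
    have hz₂mem : z - z₁ ∈ degChains 𝕜 K 1 := sub_mem hz1 hz₁mem
    -- z₁ is a cycle
    have hbz₁ : bdryMap 𝕜 K z₁ = 0 := by
      funext τ
      obtain ⟨t, ht⟩ := τ
      rw [bdryMap_apply]
      show _ = (0 : 𝕜)
      by_cases hcard : t.card = 1
      · obtain ⟨v, rfl⟩ := Finset.card_eq_one.mp hcard
        by_cases hvF : v ∈ F
        · have heq : ∀ x ∈ ({v} : Finset V)ᶜ,
              (if h : insert x {v} ∈ K then bdrySign {v} x • z₁ ⟨insert x {v}, h⟩ else 0)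
                = (if h : insert x {v} ∈ K then bdrySign {v} x • z ⟨insert x {v}, h⟩ else 0) := by
            intro x hx
            by_cases hm : insert x ({v} : Finset V) ∈ K
            · rw [dif_pos hm, dif_pos hm]
              congr 1
              simp only [hz₁def]
              split
              · rfl
              · exfalso
                rcases hcov _ hm with h | h
                · exact ‹¬ insert x {v} ⊆ F› h
                · have hvG : v ∈ G := h (Finset.mem_insert_of_mem (Finset.mem_singleton_self v))
                  have : v ∈ F ∩ G := Finset.mem_inter.mpr ⟨hvF, hvG⟩
                  rw [hFG] at this
                  exact absurd this (Finset.notMem_empty v)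
            · rw [dif_neg hm, dif_neg hm]
          rw [Finset.sum_congr rfl heq, ← bdryMap_apply z {v} ht, hzk]
          rfl
        · refine Finset.sum_eq_zero fun x hx => ?_
          by_cases hm : insert x ({v} : Finset V) ∈ K
          · rw [dif_pos hm]
            have : z₁ ⟨insert x {v}, hm⟩ = 0 := by
              simp only [hz₁def]
              rw [if_neg fun h => hvF (h (Finset.mem_insert_of_mem (Finset.mem_singleton_self v)))]
            rw [this, smul_zero]
          · rw [dif_neg hm]
      · refine Finset.sum_eq_zero fun x hx => ?_
        by_cases hm : insert x t ∈ K
        · rw [dif_pos hm]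
          have : z₁ ⟨insert x t, hm⟩ = 0 := by
            apply hz₁mem
            rw [Finset.card_insert_of_notMem (Finset.mem_compl.mp hx)]
            simp only [ne_eq]
            omega
          rw [this, smul_zero]
        · rw [dif_neg hm]
    have hbz₂ : bdryMap 𝕜 K (z - z₁) = 0 := by
      rw [map_sub, hzk, hbz₁, sub_zero]
    -- solve for z₁
    have hd₁ : ∃ d ∈ degChains 𝕜 K 2, bdryMap 𝕜 K d = z₁ := by
      rcases F.eq_empty_or_nonempty with hF0 | ⟨w, hwF⟩
      · refine ⟨0, Submodule.zero_mem _, ?_⟩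
        rw [map_zero]
        funext τ
        show (0 : 𝕜) = z₁ τ
        simp only [hz₁def]
        split
        · rename_i hsub
          rw [hF0, Finset.subset_empty] at hsub
          refine (hz1 τ ?_).symm
          rw [hsub]
          simp
        · rfl
      · refine cone_solve hK w z₁ hz₁mem hbz₁ fun π hπ hwπ hzπ => ?_
        have hπF : π ⊆ F := by
          by_contra hc
          apply hzπ
          simp only [hz₁def]
          rw [if_neg hc]
        exact hK _ hF _ (Finset.insert_subset hwF hπF)
    have hd₂ : ∃ d ∈ degChains 𝕜 K 2, bdryMap 𝕜 K d = z - z₁ := by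
      have hsupp : ∀ (π : Finset V) (h : π ∈ K), (z - z₁) ⟨π, h⟩ ≠ 0 → π ⊆ G := by
        intro π hπ hne
        by_cases hπF : π ⊆ F
        · exfalso
          apply hne
          show z ⟨π, hπ⟩ - z₁ ⟨π, hπ⟩ = 0
          simp only [hz₁def]
          rw [if_pos hπF, sub_self]
        · rcases hcov π hπ with h | h
          · exact absurd h hπF
          · exact h
      rcases G.eq_empty_or_nonempty with hG0 | ⟨w, hwG⟩
      · refine ⟨0, Submodule.zero_mem _, ?_⟩
        rw [map_zero]
        funext τ
        show (0 : 𝕜) = (z - z₁) τ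
        by_contra hc
        have := hsupp τ.1 τ.2 fun h => hc h.symm
        rw [hG0, Finset.subset_empty] at this
        apply hc
        symm
        apply hz₂mem
        rw [this]
        simp
      · refine cone_solve hK w (z - z₁) hz₂mem hbz₂ fun π hπ hwπ hzπ => ?_
        exact hK _ hG _ (Finset.insert_subset hwG (hsupp π hπ hzπ))
    obtain ⟨d₁, hd₁m, hd₁e⟩ := hd₁
    obtain ⟨d₂, hd₂m, hd₂e⟩ := hd₂
    refine ⟨d₁ + d₂, Submodule.add_mem _ hd₁m hd₂m, ?_⟩
    rw [map_add, hd₁e, hd₂e]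
    abel
end lemA

section hom
set_option linter.unusedSectionVars false
variable {𝕜 : Type} [Field 𝕜] {V : Type} [DecidableEq V] [Fintype V]

lemma homology_subsingleton {K : Set (Finset V)} (i : ℤ)
    (h : ∀ z ∈ degChains 𝕜 K i ⊓ LinearMap.ker (bdryMap 𝕜 K),
      ∃ d ∈ degChains 𝕜 K (i + 1), bdryMap 𝕜 K d = z) :
    Subsingleton (redHomology 𝕜 K i) := by
  rw [Submodule.Quotient.subsingleton_iff, Submodule.eq_top_iff']
  rintro ⟨z, hz⟩
  rw [Submodule.mem_comap]
  obtain ⟨d, hd, hde⟩ := h z hz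
  exact ⟨d, hd, hde⟩

lemma homology_nontrivial {K : Set (Finset V)} (i : ℤ) (c : TotalChains 𝕜 K)
    (hc : c ∈ degChains 𝕜 K i ⊓ LinearMap.ker (bdryMap 𝕜 K))
    (hnb : ∀ d, bdryMap 𝕜 K d ≠ c) :
    Nontrivial (redHomology 𝕜 K i) := by
  refine ⟨Submodule.Quotient.mk ⟨c, hc⟩, 0, fun h => ?_⟩
  rw [Submodule.Quotient.mk_eq_zero, Submodule.mem_comap] at h
  obtain ⟨d, _, hde⟩ := h
  exact hnb d hde

/-- A complex whose only face is `∅` has nontrivial reduced homology in degree `-1`. -/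
lemma facet_link_nontrivial {M : Set (Finset V)} (hM : ∅ ∈ M)
    (honly : ∀ ρ ∈ M, ρ = ∅) : Nontrivial (redHomology 𝕜 M (-1)) := by
  have hterm : ∀ (t : Finset V), ∀ x ∈ tᶜ,
      (if h : insert x t ∈ M then bdrySign t x •
        (fun (_ : {s : Finset V // s ∈ M}) => (1:𝕜)) ⟨insert x t, h⟩ else 0) = (0 : 𝕜) := by
    intro t x hx
    have : insert x t ∉ M := fun hm => by simpa using honly _ hm
    rw [dif_neg this]
  apply homology_nontrivial (-1) (fun _ => 1)
  · rw [Submodule.mem_inf]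
    constructor
    · intro τ hτ
      exfalso
      apply hτ
      have h := honly τ.1 τ.2
      simp [h]
    · rw [LinearMap.mem_ker]
      funext τ
      obtain ⟨t, ht⟩ := τ
      rw [bdryMap_apply]
      show _ = (0 : 𝕜)
      exact Finset.sum_eq_zero (hterm t)
  · intro d hde
    have h1 := congrFun hde ⟨∅, hM⟩
    rw [bdryMap_apply] at h1
    have h2 : (∑ x ∈ (∅ : Finset V)ᶜ,
        if h : insert x ∅ ∈ M then bdrySign ∅ x • d ⟨insert x ∅, h⟩ else 0) = (0:𝕜) := by
      refine Finset.sum_eq_zero fun x hx => ?_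
      have : insert x (∅ : Finset V) ∉ M := fun hm => by simpa using honly _ hm
      rw [dif_neg this]
    rw [h2] at h1
    exact one_ne_zero h1.symm

/-- If the vertices of `M` carry a `𝕜`-valued function constant on edges but taking
different values on two vertices, then `M` has nontrivial reduced homology in degree 0. -/
lemma h0_nontrivial {M : Set (Finset V)} (hM : IsComplex M) (g : V → 𝕜) (u v : V)
    (hu : ({u} : Finset V) ∈ M) (hv : ({v} : Finset V) ∈ M) (hguv : g u ≠ g v)
    (hedge : ∀ x y : V, x ≠ y → ({x, y} : Finset V) ∈ M → g x = g y) :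
    Nontrivial (redHomology 𝕜 M 0) := by
  have huv : u ≠ v := fun h => hguv (by rw [h])
  classical
  set c : TotalChains 𝕜 M := fun τ =>
    if τ.1 = {u} then 1 else if τ.1 = {v} then -1 else 0 with hcdef
  have hcu : ∀ (h : ({u} : Finset V) ∈ M), c ⟨{u}, h⟩ = 1 := by
    intro h; simp [hcdef]
  have hcv : ∀ (h : ({v} : Finset V) ∈ M), c ⟨{v}, h⟩ = -1 := by
    intro h
    simp [hcdef, Ne.symm huv]
  have hcval : ∀ (t : Finset V) (h : t ∈ M), t ≠ {u} → t ≠ {v} → c ⟨t, h⟩ = 0 := by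
    intro t h h1 h2
    simp only [hcdef]
    rw [if_neg h1, if_neg h2]
  apply homology_nontrivial 0 c
  · rw [Submodule.mem_inf]
    constructor
    · intro τ hτ
      obtain ⟨t, ht⟩ := τ
      refine hcval t ht (fun h => hτ ?_) (fun h => hτ ?_) <;> simp [h]
    · rw [LinearMap.mem_ker]
      funext τ
      obtain ⟨t, ht⟩ := τ
      rw [bdryMap_apply]
      show _ = (0 : 𝕜)
      by_cases h0 : t = ∅
      · subst h0
        have hterm : ∀ x ∈ ((∅ : Finset V)ᶜ),
            (if h : insert x ∅ ∈ M then bdrySign ∅ x • c ⟨insert x ∅, h⟩ else 0)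
              = ((if x = u then (1:𝕜) else 0) + (if x = v then (-1:𝕜) else 0)) := by
          intro x _
          by_cases hxu : x = u
          · subst hxu
            rw [Finset.insert_empty, dif_pos hu, bdrySign_empty, one_smul, if_pos rfl,
              if_neg huv, hcu]
            ring
          · by_cases hxv : x = v
            · subst hxv
              rw [Finset.insert_empty, dif_pos hv, bdrySign_empty, one_smul, if_neg hxu,
                if_pos rfl, hcv]
              ring
            · rw [if_neg hxu, if_neg hxv, add_zero, Finset.insert_empty]
              by_cases hm : ({x} : Finset V) ∈ M
              · rw [dif_pos hm, hcval _ hm (by simpa using hxu) (by simpa using hxv),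
                  smul_zero]
              · rw [dif_neg hm]
        rw [Finset.sum_congr rfl hterm, Finset.sum_add_distrib, Finset.compl_empty,
          Finset.sum_ite_eq' Finset.univ u (fun _ => (1:𝕜)),
          Finset.sum_ite_eq' Finset.univ v (fun _ => (-1:𝕜)), if_pos (Finset.mem_univ u),
          if_pos (Finset.mem_univ v)]
        ring
      · refine Finset.sum_eq_zero fun x hx => ?_
        have hxt : x ∉ t := Finset.mem_compl.mp hx
        have hsub : ∀ w : V, insert x t = {w} → False := by
          intro w h
          have hts : t ⊆ {w} := by rw [← h]; exact Finset.subset_insert x t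
          rcases Finset.subset_singleton_iff.mp hts with h' | h'
          · exact h0 h'
          · apply hxt
            have hxm : x ∈ insert x t := Finset.mem_insert_self x t
            rw [h, Finset.mem_singleton] at hxm
            rw [h', hxm]
            exact Finset.mem_singleton_self w
        by_cases hm : insert x t ∈ M
        · rw [dif_pos hm, hcval _ hm (fun h => hsub u h) (fun h => hsub v h), smul_zero]
        · rw [dif_neg hm]
  · -- c is not a boundary
    intro d hde
    set Φ : TotalChains 𝕜 M → 𝕜 := fun e => ∑ x : V,
      if h : ({x} : Finset V) ∈ M then g x * e ⟨{x}, h⟩ else 0 with hΦdef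
    have hΦc : Φ c = g u - g v := by
      have hterm : ∀ x ∈ (Finset.univ : Finset V),
          (if h : ({x} : Finset V) ∈ M then g x * c ⟨{x}, h⟩ else 0)
            = ((if x = u then g u else 0) + (if x = v then -(g v) else 0)) := by
        intro x _
        by_cases hxu : x = u
        · subst hxu
          rw [dif_pos hu, if_pos rfl, if_neg huv, hcu]
          ring
        · by_cases hxv : x = v
          · subst hxv
            rw [dif_pos hv, if_neg hxu, if_pos rfl, hcv]
            ring
          · rw [if_neg hxu, if_neg hxv, add_zero]
            by_cases hm : ({x} : Finset V) ∈ M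
            · rw [dif_pos hm, hcval _ hm (by simpa using hxu) (by simpa using hxv), mul_zero]
            · rw [dif_neg hm]
      rw [hΦdef]
      simp only
      rw [Finset.sum_congr rfl hterm, Finset.sum_add_distrib,
        Finset.sum_ite_eq' Finset.univ u (fun _ => g u),
        Finset.sum_ite_eq' Finset.univ v (fun _ => -(g v)), if_pos (Finset.mem_univ u),
        if_pos (Finset.mem_univ v)]
      ring
    -- Φ of any boundary vanishes
    have hΦd : Φ (bdryMap 𝕜 M d) = 0 := by
      set T : V → V → 𝕜 := fun x y => if y = x then 0 else
        (if h : insert y ({x} : Finset V) ∈ M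
          then g x * (bdrySign {x} y • d ⟨insert y {x}, h⟩) else 0) with hTdef
      have hstep1 : Φ (bdryMap 𝕜 M d) = ∑ x : V, ∑ y : V, T x y := by
        rw [hΦdef]
        simp only
        refine Finset.sum_congr rfl fun x _ => ?_
        by_cases hxM : ({x} : Finset V) ∈ M
        · rw [dif_pos hxM, bdryMap_apply, Finset.mul_sum]
          rw [show ({x} : Finset V)ᶜ = Finset.univ.erase x from Finset.compl_singleton x]
          rw [← Finset.add_sum_erase Finset.univ (T x) (Finset.mem_univ x)]
          rw [show T x x = 0 from if_pos rfl, zero_add]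
          refine Finset.sum_congr rfl fun y hy => ?_
          have hyx : y ≠ x := (Finset.mem_erase.mp hy).1
          rw [hTdef]
          simp only
          rw [if_neg hyx]
          by_cases hm : insert y ({x} : Finset V) ∈ M
          · rw [dif_pos hm, dif_pos hm]
          · rw [dif_neg hm, dif_neg hm, mul_zero]
        · rw [dif_neg hxM]
          symm
          refine Finset.sum_eq_zero fun y _ => ?_
          rw [hTdef]
          simp only
          by_cases hyx : y = x
          · rw [if_pos hyx]
          · rw [if_neg hyx, dif_neg fun hm => hxM (hM _ hm _ (Finset.subset_insert _ _))]
      rw [hstep1, ← Finset.sum_product']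
      refine Finset.sum_ninvolution (fun p => (p.2, p.1)) ?_ ?_ (fun p => Finset.mem_univ _) ?_
      · rintro ⟨x, y⟩
        simp only
        by_cases hyx : y = x
        · subst hyx
          rw [show T y y = 0 from if_pos rfl, add_zero]
        · have hxy : x ≠ y := fun h => hyx h.symm
          have hpair : insert y ({x} : Finset V) = insert x ({y} : Finset V) := by
            rw [Finset.pair_comm]
          rw [hTdef]
          simp only
          rw [if_neg hyx, if_neg hxy]
          by_cases hm : insert y ({x} : Finset V) ∈ M
          · have hm' : insert x ({y} : Finset V) ∈ M := hpair ▸ hm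
            rw [dif_pos hm, dif_pos hm']
            have hdval : d ⟨insert x ({y} : Finset V), hm'⟩
                = d ⟨insert y ({x} : Finset V), hm⟩ := by
              congr 1
              exact Subtype.ext hpair.symm
            have hgxy : g x = g y := hedge x y hxy (by rw [Finset.pair_comm]; exact hm)
            have hsgn : bdrySign {y} x = - bdrySign {x} y := bdrySign_singleton_anti
              (fun h => hxy h.symm)
            rw [hdval, hsgn, hgxy, neg_smul, mul_neg, add_neg_cancel]
          · have hm' : insert x ({y} : Finset V) ∉ M := hpair ▸ hm
            rw [dif_neg hm, dif_neg hm', add_zero]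
      · rintro ⟨x, y⟩ hne h1
        apply hne
        have h2 : y = x := congrArg Prod.fst h1
        rw [hTdef]
        simp only
        rw [if_pos h2]
      · rintro ⟨x, y⟩
        rfl
    rw [hde, hΦc] at hΦd
    exact hguv (sub_eq_zero.mp hΦd)
end hom

section comb
set_option linter.unusedSectionVars false
variable {V : Type} [DecidableEq V] [Fintype V]

def IsFacet (K : Set (Finset V)) (F : Finset V) : Prop :=
  F ∈ K ∧ ∀ π ∈ K, F ⊆ π → π = F

lemma exists_facet {K : Set (Finset V)} {π : Finset V} (hπ : π ∈ K) :
    ∃ F, π ⊆ F ∧ IsFacet K F := by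
  have hfin : {θ : Finset V | θ ∈ K ∧ π ⊆ θ}.Finite := Set.toFinite _
  obtain ⟨F, ⟨hFK, hπF⟩, hmax⟩ := Set.Finite.exists_maximalFor
    (fun θ : Finset V => θ.card) _ hfin ⟨π, hπ, subset_rfl⟩
  refine ⟨F, hπF, hFK, fun θ hθ hFθ => ?_⟩
  have hc : θ.card ≤ F.card := hmax ⟨hθ, hπF.trans hFθ⟩ (Finset.card_le_card hFθ)
  exact (Finset.eq_of_subset_of_card_le hFθ hc).symm

lemma three_facets {𝕜 : Type} [Field 𝕜] {K : Set (Finset V)} (hK : IsComplex K)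
    (hnt : Nontrivial (redHomology 𝕜 K 1)) :
    ∃ F₁ F₂ F₃ : Finset V, IsFacet K F₁ ∧ IsFacet K F₂ ∧ IsFacet K F₃ ∧
      F₁ ≠ F₂ ∧ F₁ ≠ F₃ ∧ F₂ ≠ F₃ := by
  have hns : ¬ Subsingleton (redHomology 𝕜 K 1) := by
    intro hs
    rcases hnt with ⟨x, y, hxy⟩
    exact hxy (hs.elim x y)
  have hdeg12 : degChains 𝕜 K ((1 : ℤ) + 1) = degChains 𝕜 K 2 := by norm_num
  -- K is nonempty
  have hKne : ∃ π, π ∈ K := by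
    by_contra h
    push_neg at h
    haveI : IsEmpty {t : Finset V // t ∈ K} := ⟨fun τ => h τ.1 τ.2⟩
    apply hns
    apply homology_subsingleton
    intro z hz
    refine ⟨0, Submodule.zero_mem _, ?_⟩
    rw [map_zero]
    funext τ
    exact isEmptyElim τ
  -- no two faces of K cover K
  have hcov : ∀ F G : Finset V, F ∈ K → G ∈ K → ∃ π ∈ K, ¬π ⊆ F ∧ ¬π ⊆ G := by
    intro F G hF hG
    by_contra h
    push_neg at h
    have hc : ∀ π ∈ K, π ⊆ F ∨ π ⊆ G := by
      intro π hπ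
      by_cases hf : π ⊆ F
      · exact Or.inl hf
      · exact Or.inr (h π hπ hf)
    apply hns
    apply homology_subsingleton
    intro z hz
    have h1 : z ∈ degChains 𝕜 K 1 := (Submodule.mem_inf.mp hz).1
    have h2 : bdryMap 𝕜 K z = 0 := LinearMap.mem_ker.mp (Submodule.mem_inf.mp hz).2
    obtain ⟨d, hd, hde⟩ := exact_of_cover hK F G hF hG hc z h1 h2
    exact ⟨d, hdeg12 ▸ hd, hde⟩
  obtain ⟨π₀, hπ₀⟩ := hKne
  obtain ⟨F₁, _, hF₁⟩ := exists_facet hπ₀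
  obtain ⟨π₁, hπ₁K, hπ₁a, hπ₁b⟩ := hcov F₁ F₁ hF₁.1 hF₁.1
  obtain ⟨F₂, hπ₁F₂, hF₂⟩ := exists_facet hπ₁K
  obtain ⟨π₂, hπ₂K, hπ₂a, hπ₂b⟩ := hcov F₁ F₂ hF₁.1 hF₂.1
  obtain ⟨F₃, hπ₂F₃, hF₃⟩ := exists_facet hπ₂K
  refine ⟨F₁, F₂, F₃, hF₁, hF₂, hF₃, ?_, ?_, ?_⟩
  · intro h; exact hπ₁a (h ▸ hπ₁F₂)
  · intro h; exact hπ₂a (h ▸ hπ₂F₃)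
  · intro h; exact hπ₂b (h ▸ hπ₂F₃)
end comb

/-- **Vertex lower bound for PR complexes of degree type `(a, b)`.** A PR complex of
degree type `(a, b)` (with some offset `s`) on `n` vertices satisfies `n ≥ 3b`. -/
theorem card_ge_of_degreeType_ab (𝕜 : Type) [Field 𝕜] (a b : ℕ) (ha : 0 < a)
    (hb : 0 < b) (n : ℕ) (K : Set (Finset (Fin n))) (hK : IsComplex K)
    (hdeg : ∃ s : ℕ, HasDegreeTypeOffset 𝕜 K 2 (fun j => if j = 2 then a else b) s) :
    3 * b ≤ n := by
  classical
  obtain ⟨s, H⟩ := hdeg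
  have hsum2 : ∑ j ∈ Finset.Ioc 2 2, (if j = 2 then a else b) = 0 := by simp
  have hsum1 : ∑ j ∈ Finset.Ioc 1 2, (if j = 2 then a else b) = a := by
    rw [show Finset.Ioc 1 2 = {2} from by decide, Finset.sum_singleton, if_pos rfl]
  have hsum0 : ∑ j ∈ Finset.Ioc 0 2, (if j = 2 then a else b) = b + a := by
    rw [show Finset.Ioc 0 2 = {1, 2} from by decide,
      Finset.sum_insert (by decide), Finset.sum_singleton]
    norm_num
  -- a face σ whose link has nontrivial 1-dimensional homology
  obtain ⟨σ, hσK, hσcard, hσnt⟩ := (H s 1).mpr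
    ⟨2, le_refl 2, by norm_num, by rw [hsum2, add_zero]⟩
  set L : Set (Finset (Fin n)) := link K σ with hLdef
  have hL : IsComplex L := link_isComplex hK σ
  -- every facet of K has cardinality s + (b + a)
  have hfacet_card : ∀ τ : Finset (Fin n), IsFacet K τ → τ.card = s + (b + a) := by
    intro τ hτ
    have hnt' : Nontrivial (redHomology 𝕜 (link K τ) (-1)) := by
      apply facet_link_nontrivial
      · exact ⟨Finset.disjoint_empty_right τ, by rw [Finset.union_empty]; exact hτ.1⟩
      · rintro ρ ⟨hdisj, hρK⟩
        by_contra hne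
        obtain ⟨x, hx⟩ := Finset.nonempty_iff_ne_empty.mpr hne
        have hxτ : x ∉ τ := Finset.disjoint_right.mp hdisj hx
        have hins : insert x τ ∈ K := hK _ hρK _
          (Finset.insert_subset (Finset.mem_union_right _ hx) Finset.subset_union_left)
        have heq := hτ.2 _ hins (Finset.subset_insert x τ)
        exact hxτ (heq ▸ Finset.mem_insert_self x τ)
    obtain ⟨r, hr2, hri, hm⟩ := (H τ.card (-1)).mp ⟨τ, hτ.1, rfl, hnt'⟩
    have hr0 : r = 0 := by omega
    subst hr0
    rwa [hsum0] at hm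
  -- for two distinct facets and a common subface, there is a face of size s + a containing it
  have hinter : ∀ A B : Finset (Fin n), IsFacet K A → IsFacet K B → A ≠ B →
      ∀ base : Finset (Fin n), base ⊆ A → base ⊆ B →
      ∃ ρ : Finset (Fin n), ρ ∈ K ∧ base ⊆ ρ ∧ ρ.card = s + a := by
    intro A B hA hB hAB base hbA hbB
    set P : Set (Finset (Fin n)) := {π | π ∈ K ∧ base ⊆ π ∧
      ∃ A' B', IsFacet K A' ∧ IsFacet K B' ∧ A' ≠ B' ∧ π ⊆ A' ∧ π ⊆ B'} with hPdef
    have hPne : base ∈ P := ⟨hK _ hA.1 _ hbA, subset_rfl, A, B, hA, hB, hAB, hbA, hbB⟩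
    obtain ⟨ρ, hρP, hρmax⟩ := Set.Finite.exists_maximalFor
      (fun θ : Finset (Fin n) => θ.card) P (Set.toFinite _) ⟨base, hPne⟩
    obtain ⟨hρK, hbρ, A', B', hA', hB', hAB', hρA', hρB'⟩ := hρP
    have hnostrict : ∀ π ∈ P, ρ ⊆ π → π = ρ := by
      intro π hπ hρπ
      have hc := hρmax hπ (Finset.card_le_card hρπ)
      exact (Finset.eq_of_subset_of_card_le hρπ hc).symm
    have huniq : ∀ x : Fin n, x ∉ ρ → ∀ Hf : Finset (Fin n), IsFacet K Hf →
        insert x ρ ⊆ Hf → insert x ρ ⊆ A' → Hf = A' := by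
      intro x hxρ Hf hHf hsub hxA
      by_contra hne
      have hmem : insert x ρ ∈ P := ⟨hK _ hHf.1 _ hsub,
        hbρ.trans (Finset.subset_insert _ _), Hf, A', hHf, hA', hne, hsub, hxA⟩
      have heq := hnostrict _ hmem (Finset.subset_insert _ _)
      exact hxρ (heq ▸ Finset.mem_insert_self x ρ)
    -- u and v
    have hρA'ne : ρ ≠ A' := by
      rintro rfl
      obtain ⟨y, hyB, hyρ⟩ := Finset.exists_of_ssubset
        (Finset.ssubset_iff_subset_ne.mpr ⟨hρB', hAB'⟩)
      have hins : insert y ρ ∈ K := hK _ hB'.1 _ (Finset.insert_subset hyB hρB')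
      have heq := hA'.2 _ hins (Finset.subset_insert _ _)
      exact hyρ (heq ▸ Finset.mem_insert_self y ρ)
    have hρB'ne : ρ ≠ B' := by
      rintro rfl
      obtain ⟨y, hyA, hyρ⟩ := Finset.exists_of_ssubset
        (Finset.ssubset_iff_subset_ne.mpr ⟨hρA', fun h => hAB' h.symm⟩)
      have hins : insert y ρ ∈ K := hK _ hA'.1 _ (Finset.insert_subset hyA hρA')
      have heq := hB'.2 _ hins (Finset.subset_insert _ _)
      exact hyρ (heq ▸ Finset.mem_insert_self y ρ)
    obtain ⟨u, huA', huρ⟩ := Finset.exists_of_ssubset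
      (Finset.ssubset_iff_subset_ne.mpr ⟨hρA', hρA'ne⟩)
    obtain ⟨v, hvB', hvρ⟩ := Finset.exists_of_ssubset
      (Finset.ssubset_iff_subset_ne.mpr ⟨hρB', hρB'ne⟩)
    set g : Fin n → 𝕜 := fun x => if insert x ρ ⊆ A' then 1 else 0 with hgdef
    have hgu : g u = 1 := if_pos (Finset.insert_subset huA' hρA')
    have hgv : g v = 0 := by
      rw [hgdef]
      simp only
      rw [if_neg]
      intro hvA
      have hmem : insert v ρ ∈ P := ⟨hK _ hA'.1 _ hvA,
        hbρ.trans (Finset.subset_insert _ _), A', B', hA', hB', hAB', hvA,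
        Finset.insert_subset hvB' hρB'⟩
      have heq := hnostrict _ hmem (Finset.subset_insert _ _)
      exact hvρ (heq ▸ Finset.mem_insert_self v ρ)
    have hu : ({u} : Finset (Fin n)) ∈ link K ρ := by
      refine ⟨Finset.disjoint_singleton_right.mpr huρ, ?_⟩
      rw [Finset.union_comm, ← Finset.insert_eq]
      exact hK _ hA'.1 _ (Finset.insert_subset huA' hρA')
    have hv : ({v} : Finset (Fin n)) ∈ link K ρ := by
      refine ⟨Finset.disjoint_singleton_right.mpr hvρ, ?_⟩
      rw [Finset.union_comm, ← Finset.insert_eq]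
      exact hK _ hB'.1 _ (Finset.insert_subset hvB' hρB')
    have hedge : ∀ x y : Fin n, x ≠ y → ({x, y} : Finset (Fin n)) ∈ link K ρ →
        g x = g y := by
      rintro x y hxy ⟨hdisj, hmem⟩
      have hxρ : x ∉ ρ := Finset.disjoint_right.mp hdisj (by simp)
      have hyρ : y ∉ ρ := Finset.disjoint_right.mp hdisj (by simp)
      obtain ⟨Hf, hsubHf, hHf⟩ := exists_facet hmem
      have hxHf : insert x ρ ⊆ Hf := Finset.insert_subset
        (hsubHf (Finset.mem_union_right _ (by simp))) (Finset.subset_union_left.trans hsubHf)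
      have hyHf : insert y ρ ⊆ Hf := Finset.insert_subset
        (hsubHf (Finset.mem_union_right _ (by simp))) (Finset.subset_union_left.trans hsubHf)
      rw [hgdef]
      simp only
      by_cases hgx : insert x ρ ⊆ A'
      · have hHfA : Hf = A' := huniq x hxρ Hf hHf hxHf hgx
        rw [if_pos hgx, if_pos (hHfA ▸ hyHf)]
      · have hgy : ¬ insert y ρ ⊆ A' := by
          intro hy
          have hHfA : Hf = A' := huniq y hyρ Hf hHf hyHf hy
          exact hgx (hHfA ▸ hxHf)
        rw [if_neg hgx, if_neg hgy]
    have hnt0 : Nontrivial (redHomology 𝕜 (link K ρ) 0) :=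
      h0_nontrivial (link_isComplex hK ρ) g u v hu hv
        (by rw [hgu, hgv]; exact one_ne_zero) hedge
    obtain ⟨r, hr2, hri, hm⟩ := (H ρ.card 0).mp ⟨ρ, hρK, rfl, hnt0⟩
    have hr1 : r = 1 := by omega
    subst hr1
    rw [hsum1] at hm
    exact ⟨ρ, hρK, hbρ, hm⟩
  -- facets of L
  obtain ⟨F₁, F₂, F₃, hF₁, hF₂, hF₃, h12, h13, h23⟩ := three_facets hL hσnt
  have hKfacet : ∀ F, IsFacet L F → IsFacet K (σ ∪ F) ∧ Disjoint σ F := by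
    intro F hF
    obtain ⟨hdisj, hmem⟩ := hF.1
    refine ⟨⟨hmem, ?_⟩, hdisj⟩
    intro π hπ hsub
    by_contra hne
    obtain ⟨x, hxπ, hxu⟩ := Finset.exists_of_ssubset
      (Finset.ssubset_iff_subset_ne.mpr ⟨hsub, fun h => hne h.symm⟩)
    have hxσ : x ∉ σ := fun h => hxu (Finset.mem_union_left _ h)
    have hxF : x ∉ F := fun h => hxu (Finset.mem_union_right _ h)
    have hins : insert x F ∈ L := by
      refine ⟨Finset.disjoint_insert_right.mpr ⟨hxσ, hdisj⟩, ?_⟩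
      refine hK _ hπ _ ?_
      refine Finset.union_subset (Finset.subset_union_left.trans hsub) ?_
      exact Finset.insert_subset hxπ ((Finset.subset_union_right).trans hsub)
    have heq := hF.2 _ hins (Finset.subset_insert x F)
    exact hxF (heq ▸ Finset.mem_insert_self x F)
  have hcardF : ∀ F, IsFacet L F → F.card = b + a := by
    intro F hF
    obtain ⟨hKf, hdisj⟩ := hKfacet F hF
    have hc := hfacet_card _ hKf
    rw [Finset.card_union_of_disjoint hdisj, hσcard] at hc
    omega
  have hpair : ∀ F G, IsFacet L F → IsFacet L G → F ≠ G → (F ∩ G).card ≤ a := by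
    intro F G hF hG hFG
    obtain ⟨hKF, hdF⟩ := hKfacet F hF
    obtain ⟨hKG, hdG⟩ := hKfacet G hG
    have hne : σ ∪ F ≠ σ ∪ G := by
      intro h
      apply hFG
      have h1 : (σ ∪ F) \ σ = F := Finset.union_sdiff_cancel_left hdF
      have h2 : (σ ∪ G) \ σ = G := Finset.union_sdiff_cancel_left hdG
      rw [← h1, ← h2, h]
    obtain ⟨ρ, hρK, hbase, hρcard⟩ := hinter (σ ∪ F) (σ ∪ G) hKF hKG hne (σ ∪ (F ∩ G))
      (Finset.union_subset_union_right Finset.inter_subset_left)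
      (Finset.union_subset_union_right Finset.inter_subset_right)
    have h1 : (σ ∪ (F ∩ G)).card = s + (F ∩ G).card := by
      rw [Finset.card_union_of_disjoint (hdF.mono_right Finset.inter_subset_left), hσcard]
    have h2 : (σ ∪ (F ∩ G)).card ≤ ρ.card := Finset.card_le_card hbase
    omega
  -- final arithmetic
  have hc1 := hcardF F₁ hF₁
  have hc2 := hcardF F₂ hF₂
  have hc3 := hcardF F₃ hF₃
  have p12 := hpair F₁ F₂ hF₁ hF₂ h12
  have p13 := hpair F₁ F₃ hF₁ hF₃ h13
  have p23 := hpair F₂ F₃ hF₂ hF₃ h23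
  have e1 : (F₁ ∪ F₂).card + (F₁ ∩ F₂).card = F₁.card + F₂.card :=
    Finset.card_union_add_card_inter _ _
  have e2 : (F₁ ∪ F₂ ∪ F₃).card + ((F₁ ∪ F₂) ∩ F₃).card = (F₁ ∪ F₂).card + F₃.card :=
    Finset.card_union_add_card_inter _ _
  have e3 : ((F₁ ∪ F₂) ∩ F₃).card ≤ (F₁ ∩ F₃).card + (F₂ ∩ F₃).card := by
    rw [Finset.union_inter_distrib_right]
    exact Finset.card_union_le _ _
  have e4 : (F₁ ∪ F₂ ∪ F₃).card ≤ n := by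
    have hle := Finset.card_le_univ (F₁ ∪ F₂ ∪ F₃)
    simpa using hle
  omega
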